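/- Let K_ν = F_q((θ⁻¹)) with q odd, let Q(x) = 2x₁x₃ − x₂², and let L ⊂ K_ν³ be a lattice (a cocompact discrete O-submodule of rank 3). Then for every t₀ ∈ K_ν and r₀ > 0 there exists a nonzero vector v ∈ v₂(B(t₀,r₀))·L such that Q(v) = 0, where B(t₀,r₀) is the open ball of radius r₀ around t₀ and v₂(s) is the unipotent matrix with parameter s in the (1,3) entry. -/

import Mathlib

set_option synthInstance.maxHeartbeats 800000
set_option maxHeartbeats 1000000

noncomputable section

abbrev Kv (F : Type) [Field F] := LaurentSeries F

def theta (F : Type) [Field F] : Kv F := HahnSeries.single (-1) 1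

/-- The embedding of the ring of `ν`-integers `O_ν = F_q[θ]` into `K_ν`. -/
def polyMap (F : Type) [Field F] : Polynomial F →+* Kv F :=
  (Polynomial.aeval (theta F)).toRingHom

/-- A compact subset of `K_ν` is bounded in valuation. -/
lemma aux_compact_bounded (F : Type) [Field F] (C : Set (Kv F)) (hC : IsCompact C) :
    ∃ R : WithZero (Multiplicative ℤ), ∀ c ∈ C, Valued.v c ≤ R := by
  obtain ⟨t, _, hcover⟩ := hC.elim_nhds_subcover
    (fun c => {y | Valued.v (y - c) < (1 : WithZero (Multiplicative ℤ))})
    (fun c _ => Valued.mem_nhds.mpr ⟨1, fun y hy => by simpa using hy⟩)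
  refine ⟨t.sup (fun c => max 1 (Valued.v c)), fun x hx => ?_⟩
  obtain ⟨c, hct, hxc⟩ := Set.mem_iUnion₂.mp (hcover hx)
  calc Valued.v x = Valued.v ((x - c) + c) := by ring_nf
    _ ≤ max (Valued.v (x - c)) (Valued.v c) := Valuation.map_add _ _ _
    _ ≤ max 1 (Valued.v c) := max_le_max (le_of_lt hxc) le_rfl
    _ ≤ _ := Finset.le_sup (f := fun c => max 1 (Valued.v c)) hct


lemma aux_mul_lt {α : Type*} [LinearOrderedCommGroupWithZero α] {a b c : α} (hc : c ≠ 0)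
    (h : a < b) : a * c < b * c := by
  have h2 : c * a < c * b := mul_lt_mul_of_pos_left h (zero_lt_iff.mpr hc)
  rwa [mul_comm c a, mul_comm c b] at h2

lemma aux_lt_mul {α : Type*} [LinearOrderedCommGroupWithZero α] {a b c : α} (hb : b ≠ 0)
    (h : a * b⁻¹ < c) : a < c * b := by
  have h2 := aux_mul_lt hb h
  rwa [inv_mul_cancel_right₀ hb] at h2

lemma aux_div_lt {α : Type*} [LinearOrderedCommGroupWithZero α] {a b c : α} (hb : b ≠ 0)
    (h : a < c * b) : a / b < c := by
  have h2 := aux_mul_lt (inv_ne_zero hb) h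
  rwa [mul_inv_cancel_right₀ hb, ← div_eq_mul_inv] at h2

lemma aux_cancel3 {α : Type*} [CommGroupWithZero α] (a b c : α) (hb : b ≠ 0) (hc : c ≠ 0) :
    a * b⁻¹ * c⁻¹ * (b * c) = a := by
  field_simp

/-- For every lattice `L ⊂ K_ν³` (a discrete cocompact `O_ν`-submodule) and every open ball
`B(t₀, γ)` in `K_ν`, there is `s ∈ B(t₀, γ)` and a nonzero `v ∈ v₂(s)·L` with `Q(v) = 0`,
where `Q(x) = 2x₁x₃ − x₂²`. -/
theorem stmt_9 (F : Type) [Field F] [Fintype F] (hodd : ringChar F ≠ 2)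
    (Q : (Fin 3 → Kv F) → Kv F)
    (hQ : ∀ u : Fin 3 → Kv F, Q u = 2 * u 0 * u 2 - (u 1) ^ 2)
    (v₂ : Kv F → Matrix (Fin 3) (Fin 3) (Kv F))
    (hv₂ : ∀ t : Kv F, v₂ t = !![1, 0, t; 0, 1, 0; 0, 0, 1])
    (L : AddSubgroup (Fin 3 → Kv F))
    (hmod : ∀ p : Polynomial F, ∀ l ∈ L, (fun i => polyMap F p * l i) ∈ L)
    (hdisc : DiscreteTopology L)
    (hcocompact : ∃ C : Set (Fin 3 → Kv F), IsCompact C ∧ ∀ x, ∃ l ∈ L, x + l ∈ C)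
    (t₀ : Kv F) (γ : (WithZero (Multiplicative ℤ))ˣ) :
    ∃ s : Kv F, Valued.v (s - t₀) < (γ : WithZero (Multiplicative ℤ)) ∧
      ∃ l ∈ L, (v₂ s).mulVec l ≠ 0 ∧ Q ((v₂ s).mulVec l) = 0 := by
  classical
  obtain ⟨C, hC, hcov⟩ := hcocompact
  -- 2 is invertible
  have h2 : (2 : Kv F) ≠ 0 := by
    have h2F : (2 : F) ≠ 0 := by
      intro h
      have hp : (ringChar F).Prime := CharP.char_is_prime F (ringChar F)
      have : ringChar F ∣ 2 := (CharP.cast_eq_zero_iff F (ringChar F) 2).mp h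
      exact hodd ((Nat.prime_dvd_prime_iff_eq hp Nat.prime_two).mp this)
    rw [← map_ofNat (algebraMap F (Kv F)) 2]
    simpa using h2F
  set v2 : WithZero (Multiplicative ℤ) := Valued.v (2 : Kv F) with hv2def
  have hv2 : v2 ≠ 0 := (Valuation.ne_zero_iff _).mpr h2
  -- coordinate bound on C
  obtain ⟨R0, hR0⟩ := aux_compact_bounded F ((fun f => f 0) '' C) (hC.image (continuous_apply 0))
  obtain ⟨R1, hR1⟩ := aux_compact_bounded F ((fun f => f 1) '' C) (hC.image (continuous_apply 1))
  obtain ⟨R2, hR2⟩ := aux_compact_bounded F ((fun f => f 2) '' C) (hC.image (continuous_apply 2))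
  set R : WithZero (Multiplicative ℤ) := max 1 (max R0 (max R1 R2)) with hRdef
  have hR : ∀ c ∈ C, ∀ i, Valued.v (c i) ≤ R := by
    intro c hc i
    fin_cases i
    · exact le_trans (hR0 _ (Set.mem_image_of_mem _ hc))
        (le_trans (le_max_left _ _) (le_max_right _ _))
    · exact le_trans (hR1 _ (Set.mem_image_of_mem _ hc))
        (le_trans (le_trans (le_max_left _ _) (le_max_right _ _)) (le_max_right _ _))
    · exact le_trans (hR2 _ (Set.mem_image_of_mem _ hc))
        (le_trans (le_trans (le_max_right _ _) (le_max_right _ _)) (le_max_right _ _))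
  set T : WithZero (Multiplicative ℤ) := max 1 (Valued.v t₀) with hTdef
  set g : WithZero (Multiplicative ℤ) := (γ : WithZero (Multiplicative ℤ)) with hgdef
  have hg : g ≠ 0 := γ.ne_zero
  -- the big parameter
  set M : WithZero (Multiplicative ℤ) :=
    max 1 (max R (max (R * T * g⁻¹) (R * R * v2⁻¹ * g⁻¹))) with hMdef
  have hM0 : M ≠ 0 := ne_of_gt (lt_of_lt_of_le zero_lt_one (le_max_left _ _))
  set n : ℤ := Multiplicative.toAdd (WithZero.unzero hM0) + 1 with hndef
  set V : WithZero (Multiplicative ℤ) := ((Multiplicative.ofAdd n : Multiplicative ℤ) : WithZero (Multiplicative ℤ)) with hVdef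
  have hVne : V ≠ 0 := WithZero.coe_ne_zero
  have hMV : M < V := by
    rw [← WithZero.coe_unzero hM0, hVdef, WithZero.coe_lt_coe, ← Multiplicative.toAdd_lt,
      toAdd_ofAdd, hndef]
    exact lt_add_one _
  have h1V : (1 : WithZero (Multiplicative ℤ)) < V := lt_of_le_of_lt (le_max_left _ _) hMV
  have hRM : R ≤ M := le_trans (le_max_left _ _) (le_max_right _ _)
  have hRV : R < V := lt_of_le_of_lt hRM hMV
  -- the derived inequalities
  have hb : R * T < V * g := by
    have h1 : R * T * g⁻¹ < V :=
      lt_of_le_of_lt (le_trans (le_trans (le_max_left _ _) (le_max_right _ _))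
        (le_max_right 1 _)) hMV
    exact aux_lt_mul hg h1
  have hcc : R * R < V * V * (v2 * g) := by
    have h1 : R * R * v2⁻¹ * g⁻¹ < V :=
      lt_of_le_of_lt (le_trans (le_trans (le_max_right _ _) (le_max_right _ _))
        (le_max_right 1 _)) hMV
    have hVsq : V ≤ V * V := by
      calc V = 1 * V := (one_mul V).symm
        _ ≤ V * V := mul_le_mul_left (le_of_lt h1V) V
    have h1' : R * R * (v2 * g)⁻¹ < V * V := by
      rw [mul_inv, ← mul_assoc]
      exact lt_of_lt_of_le h1 hVsq
    exact aux_lt_mul (mul_ne_zero hv2 hg) h1'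
  -- choose w and a lattice point near it
  set w₃ : Kv F := HahnSeries.single (-n) 1 with hw₃def
  have hw₃v : Valued.v w₃ = V := by
    rw [hw₃def, LaurentSeries.valuation_single_zpow (K := F) (-n), neg_neg, hVdef]
    rfl
  set w : Fin 3 → Kv F := ![-t₀ * w₃, 0, w₃] with hwdef
  have hw0 : w 0 = -t₀ * w₃ := rfl
  have hw1 : w 1 = 0 := rfl
  have hw2 : w 2 = w₃ := rfl
  obtain ⟨l, hlL, hlC⟩ := hcov (-w)
  have he : ∀ i, Valued.v ((-w + l) i) ≤ R := fun i => hR _ hlC i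
  -- facts about l
  have hl2eq : l 2 = w₃ + (-w + l) 2 := by
    simp [Pi.add_apply, Pi.neg_apply, hw2]
  have hl2v : Valued.v (l 2) = V := by
    rw [hl2eq]
    rw [Valuation.map_add_eq_of_lt_left _ (by rw [hw₃v]; exact lt_of_le_of_lt (le_trans (he 2) hRM) hMV)]
    exact hw₃v
  have hl2ne : l 2 ≠ 0 := by
    intro h
    rw [h] at hl2v
    exact hVne (by simpa using hl2v.symm)
  have hl1v : Valued.v (l 1) ≤ R := by
    have := he 1
    simpa [Pi.add_apply, Pi.neg_apply, hw1] using this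
  have hl0eq : l 0 + t₀ * l 2 = (-w + l) 0 + t₀ * ((-w + l) 2) := by
    simp only [Pi.add_apply, Pi.neg_apply, hw0, hw2]
    ring
  have hl0v : Valued.v (l 0 + t₀ * l 2) ≤ R * T := by
    rw [hl0eq]
    refine le_trans (Valuation.map_add _ _ _) (max_le ?_ ?_)
    · calc Valued.v ((-w + l) 0) ≤ R := he 0
        _ = R * 1 := (mul_one R).symm
        _ ≤ R * T := mul_le_mul_right (le_max_left _ _) R
    · rw [Valuation.map_mul]
      calc Valued.v t₀ * Valued.v ((-w + l) 2) ≤ T * R :=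
            mul_le_mul' (le_max_right _ _) (he 2)
        _ = R * T := mul_comm _ _
  -- define s
  set num : Kv F := l 1 ^ 2 / 2 - (l 0 + t₀ * l 2) * l 2 with hnumdef
  set s : Kv F := t₀ + num / (l 2) ^ 2 with hsdef
  have hmv : (v₂ s).mulVec l = ![l 0 + s * l 2, l 1, l 2] := by
    funext i
    rw [hv₂]
    fin_cases i <;>
      simp [Matrix.mulVec, dotProduct, Fin.sum_univ_three] <;> ring
  refine ⟨s, ?_, l, hlL, ?_, ?_⟩
  · -- valuation bound
    have hst : s - t₀ = num / (l 2) ^ 2 := by rw [hsdef]; ring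
    have hVV : (V * V : WithZero (Multiplicative ℤ)) ≠ 0 := mul_ne_zero hVne hVne
    have key : Valued.v num < g * (V * V) := by
      refine lt_of_le_of_lt (Valuation.map_sub _ _ _) (max_lt ?_ ?_)
      · rw [map_div₀, map_pow, ← hv2def]
        refine aux_div_lt hv2 ?_
        have h1 : Valued.v (l 1) ^ 2 ≤ R * R := by
          rw [pow_two]; exact mul_le_mul' hl1v hl1v
        refine lt_of_le_of_lt h1 (lt_of_lt_of_eq hcc ?_)
        rw [mul_comm v2 g, ← mul_assoc, mul_comm (V * V) g, mul_assoc]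
      · rw [Valuation.map_mul, hl2v]
        calc Valued.v (l 0 + t₀ * l 2) * V ≤ (R * T) * V := mul_le_mul_left hl0v V
          _ < (V * g) * V := aux_mul_lt hVne hb
          _ = g * (V * V) := by rw [mul_comm V g, mul_assoc]
    rw [hst, map_div₀, map_pow, hl2v, pow_two]
    exact aux_div_lt hVV key
  · -- nonzero
    intro h
    rw [hmv] at h
    exact hl2ne (by simpa using congrFun h 2)
  · -- Q vanishes
    rw [hQ, hmv]
    simp only [Matrix.cons_val_zero, Matrix.cons_val_one, Matrix.head_cons,
      Matrix.cons_val_two, Matrix.tail_cons]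
    rw [hsdef, hnumdef]
    field_simp
    ring

end
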